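/- There exists a finite rotation-puzzle instance 𝒜 over the two-color tile set T_2 (the two-color AND subpuzzle, simulating an AND gate) with two designated input boundary edges at its bottom and one designated output boundary edge at its top, such that for each pair of colors (c₁, c₂) ∈ {blue, red}² the instance 𝒜 has exactly one solution whose colors at the two input edges are c₁ and c₂ respectively, and this solution has color blue at the output edge if c₁ = c₂ = blue, and color red at the output edge otherwise. -/

import Mathlib

/-- The two Tantrix colors used in the two-color tile set. -/
inductive Color where
  | red
  | blue
deriving DecidableEq

/-- A tile is its clockwise color sequence: a word of length 6 over the colors,
edges indexed `0, …, 5` clockwise. -/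
abbrev Tile := Fin 6 → Color

/-- Cyclic rotation of a tile by `k` steps: edge `i` of the rotated tile carries the
color of edge `i + k` of the original sequence.  Two solutions are compared as the
assigned rotated color sequences, so orientations of a tile with identical color
sequences are identified. -/
def rotTile (k : Fin 6) (t : Tile) : Tile := fun i => t (i + k)

open Color in
/-- The two-color tile set `T₂`, consisting of the 8 color sequences
bbrrrr, rrbbbb, brrbrr, rbbrbb, rbrrrb, brbbbr, bbbbbb, rrrrrr. -/
def T2 : Set Tile :=
  { ![blue,blue,red,red,red,red],
    ![red,red,blue,blue,blue,blue],
    ![blue,red,red,blue,red,red],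
    ![red,blue,blue,red,blue,blue],
    ![red,blue,red,red,red,blue],
    ![blue,red,blue,blue,blue,red],
    ![blue,blue,blue,blue,blue,blue],
    ![red,red,red,red,red,red] }

/-- The six neighbor offsets of the hexagonal layout of `ℤ²`, listed clockwise
starting from straight up; edge `i` of a tile at `x` is the edge shared with the
neighboring point `x + dirs i`, and opposite directions differ by `3` (mod 6).
Two points are neighbors exactly if their difference is one of these offsets. -/
def dirs : Fin 6 → ℤ × ℤ := ![(0,1), (1,1), (1,0), (0,-1), (-1,-1), (-1,0)]

/-- A finite rotation-puzzle instance over the tile set `T2`: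
a function from a finite set of points of `ℤ²` to `T2`. -/
structure Puzzle where
  tiles : ℤ × ℤ → Option Tile
  finite : {x | tiles x ≠ none}.Finite
  memT2 : ∀ x t, tiles x = some t → t ∈ T2

/-- `sol` is a solution of the instance `P`: it assigns to each occupied point a
cyclic rotation of the tile placed there, such that for every pair of neighboring
occupied points the two assigned sequences give the same color to their joint edge
(edge `d` of the tile at `x` is glued to edge `d + 3` of the tile at `x + dirs d`). -/
def IsSolution (P : Puzzle) (sol : ℤ × ℤ → Option Tile) : Prop :=
  (∀ x, (P.tiles x = none → sol x = none) ∧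
    (∀ t, P.tiles x = some t → ∃ k : Fin 6, sol x = some (rotTile k t))) ∧
  (∀ (x : ℤ × ℤ) (d : Fin 6) (s s' : Tile),
    sol x = some s → sol (x + dirs d) = some s' → s d = s' (d + 3))

/-- `(x, d)` is a boundary edge of `P`: the point `x` is occupied and its
neighbor in direction `d` is not. -/
def IsBoundary (P : Puzzle) (x : ℤ × ℤ) (d : Fin 6) : Prop :=
  P.tiles x ≠ none ∧ P.tiles (x + dirs d) = none

/-- The solution `sol` has color `c` at the edge in direction `d` of the tile at `x`. -/
def SolColor (sol : ℤ × ℤ → Option Tile) (x : ℤ × ℤ) (d : Fin 6) (c : Color) : Prop :=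
  ∃ s, sol x = some s ∧ s d = c

section ANDGadget

instance : Fintype Color := ⟨{.red, .blue}, by intro x; cases x <;> simp⟩

open Color

def tA : Tile := ![red,red,blue,blue,blue,blue]
def tB : Tile := ![blue,blue,blue,blue,blue,blue]
def tC : Tile := ![blue,blue,red,red,red,red]
def tE : Tile := ![red,red,red,red,red,red]

def pA : ℤ × ℤ := (0,0)
def pB : ℤ × ℤ := (0,1)
def pC : ℤ × ℤ := (1,0)
def pD : ℤ × ℤ := (1,1)
def pE : ℤ × ℤ := (2,0)

def Ptiles : ℤ × ℤ → Option Tile := fun x =>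
  if x = pA then some tA else if x = pB then some tB else if x = pC then some tC
  else if x = pD then some tC else if x = pE then some tE else none

lemma Ptiles_none {x : ℤ × ℤ} (h1 : x ≠ pA) (h2 : x ≠ pB) (h3 : x ≠ pC)
    (h4 : x ≠ pD) (h5 : x ≠ pE) : Ptiles x = none := by
  simp [Ptiles, h1, h2, h3, h4, h5]

def P : Puzzle where
  tiles := Ptiles
  finite := by
    apply Set.Finite.subset (Set.toFinite {pA, pB, pC, pD, pE})
    intro x hx
    by_contra h
    simp only [Set.mem_insert_iff, Set.mem_singleton_iff] at h
    push_neg at h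
    exact hx (Ptiles_none h.1 h.2.1 h.2.2.1 h.2.2.2.1 h.2.2.2.2)
  memT2 := by
    intro x t h
    unfold Ptiles at h
    split_ifs at h <;>
      first
        | (injection h with h; subst h; simp [T2, tA, tB, tC, tE])
        | exact Option.noConfusion h

def mkSol (kA kB kC kD kE : Fin 6) : ℤ × ℤ → Option Tile := fun x =>
  if x = pA then some (rotTile kA tA) else if x = pB then some (rotTile kB tB)
  else if x = pC then some (rotTile kC tC) else if x = pD then some (rotTile kD tC)
  else if x = pE then some (rotTile kE tE) else none

lemma mk_pA (kA kB kC kD kE : Fin 6) :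
    mkSol kA kB kC kD kE pA = some (rotTile kA tA) := by
  rfl

lemma mk_pB (kA kB kC kD kE : Fin 6) :
    mkSol kA kB kC kD kE pB = some (rotTile kB tB) := by
  rfl

lemma mk_pC (kA kB kC kD kE : Fin 6) :
    mkSol kA kB kC kD kE pC = some (rotTile kC tC) := by
  rfl

lemma mk_pD (kA kB kC kD kE : Fin 6) :
    mkSol kA kB kC kD kE pD = some (rotTile kD tC) := by
  rfl

lemma mk_pE (kA kB kC kD kE : Fin 6) :
    mkSol kA kB kC kD kE pE = some (rotTile kE tE) := by
  rfl

lemma mk_none (kA kB kC kD kE : Fin 6) {x : ℤ × ℤ} (h1 : x ≠ pA) (h2 : x ≠ pB)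
    (h3 : x ≠ pC) (h4 : x ≠ pD) (h5 : x ≠ pE) :
    mkSol kA kB kC kD kE x = none := by
  simp [mkSol, h1, h2, h3, h4, h5]

lemma isSolution_mkSol (kA kB kC kD kE : Fin 6)
    (hAB : rotTile kA tA 0 = rotTile kB tB 3)
    (hAD : rotTile kA tA 1 = rotTile kD tC 4)
    (hAC : rotTile kA tA 2 = rotTile kC tC 5)
    (hCD : rotTile kC tC 0 = rotTile kD tC 3)
    (hCE : rotTile kC tC 2 = rotTile kE tE 5)
    (hBD : rotTile kB tB 2 = rotTile kD tC 5) :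
    IsSolution P (mkSol kA kB kC kD kE) := by
  constructor
  · intro x
    constructor
    · intro hx
      change Ptiles x = none at hx
      unfold Ptiles at hx
      unfold mkSol
      split_ifs at hx ⊢ <;> simp_all
    · intro t ht
      change Ptiles x = some t at ht
      unfold Ptiles at ht
      unfold mkSol
      split_ifs at ht ⊢ <;>
        first
          | (injection ht with ht; subst ht; exact ⟨_, rfl⟩)
          | exact Option.noConfusion ht
  · intro x d s s' hs hs'
    unfold mkSol at hs
    split_ifs at hs with h1 h2 h3 h4 h5
    · subst h1; injection hs with hs; subst hs
      fin_cases d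
      · injection hs' with h; subst h; exact hAB
      · injection hs' with h; subst h; exact hAD
      · injection hs' with h; subst h; exact hAC
      · (rw [mk_none] at hs' <;> first | cases hs' | decide)
      · (rw [mk_none] at hs' <;> first | cases hs' | decide)
      · (rw [mk_none] at hs' <;> first | cases hs' | decide)
    · subst h2; injection hs with hs; subst hs
      fin_cases d
      · (rw [mk_none] at hs' <;> first | cases hs' | decide)
      · (rw [mk_none] at hs' <;> first | cases hs' | decide)
      · injection hs' with h; subst h; exact hBD
      · injection hs' with h; subst h; exact hAB.symm
      · (rw [mk_none] at hs' <;> first | cases hs' | decide)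
      · (rw [mk_none] at hs' <;> first | cases hs' | decide)
    · subst h3; injection hs with hs; subst hs
      fin_cases d
      · injection hs' with h; subst h; exact hCD
      · (rw [mk_none] at hs' <;> first | cases hs' | decide)
      · injection hs' with h; subst h; exact hCE
      · (rw [mk_none] at hs' <;> first | cases hs' | decide)
      · (rw [mk_none] at hs' <;> first | cases hs' | decide)
      · injection hs' with h; subst h; exact hAC.symm
    · subst h4; injection hs with hs; subst hs
      fin_cases d
      · (rw [mk_none] at hs' <;> first | cases hs' | decide)
      · (rw [mk_none] at hs' <;> first | cases hs' | decide)
      · (rw [mk_none] at hs' <;> first | cases hs' | decide)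
      · injection hs' with h; subst h; exact hCD.symm
      · injection hs' with h; subst h; exact hAD.symm
      · injection hs' with h; subst h; exact hBD.symm
    · subst h5; injection hs with hs; subst hs
      fin_cases d
      · (rw [mk_none] at hs' <;> first | cases hs' | decide)
      · (rw [mk_none] at hs' <;> first | cases hs' | decide)
      · (rw [mk_none] at hs' <;> first | cases hs' | decide)
      · (rw [mk_none] at hs' <;> first | cases hs' | decide)
      · (rw [mk_none] at hs' <;> first | cases hs' | decide)
      · injection hs' with h; subst h; exact hCE.symm

def expA : Color → Color → Fin 6
  | blue, blue => 5 | blue, red => 2 | red, blue => 4 | red, red => 3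
def expC : Color → Color → Fin 6
  | blue, blue => 3 | blue, red => 2 | red, blue => 3 | red, red => 2
def expD : Color → Color → Fin 6
  | blue, blue => 1 | _, _ => 2

set_option maxHeartbeats 4000000 in
set_option synthInstance.maxSize 2000 in
set_option synthInstance.maxHeartbeats 1000000 in
lemma uniq_rots : ∀ (c1 c2 : Color) (kA kB kC kD kE : Fin 6),
    rotTile kA tA 3 = c1 → rotTile kC tC 3 = c2 →
    rotTile kA tA 0 = rotTile kB tB 3 →
    rotTile kA tA 1 = rotTile kD tC 4 →
    rotTile kA tA 2 = rotTile kC tC 5 →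
    rotTile kC tC 0 = rotTile kD tC 3 →
    rotTile kC tC 2 = rotTile kE tE 5 →
    rotTile kB tB 2 = rotTile kD tC 5 →
    rotTile kA tA = rotTile (expA c1 c2) tA ∧ rotTile kB tB = rotTile 0 tB ∧
    rotTile kC tC = rotTile (expC c1 c2) tC ∧ rotTile kD tC = rotTile (expD c1 c2) tC ∧
    rotTile kE tE = rotTile 0 tE := by decide

set_option maxHeartbeats 1000000 in
set_option synthInstance.maxSize 2000 in
set_option synthInstance.maxHeartbeats 1000000 in
lemma exists_ok : ∀ (c1 c2 : Color),
    rotTile (expA c1 c2) tA 3 = c1 ∧ rotTile (expC c1 c2) tC 3 = c2 ∧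
    rotTile (expA c1 c2) tA 0 = rotTile 0 tB 3 ∧
    rotTile (expA c1 c2) tA 1 = rotTile (expD c1 c2) tC 4 ∧
    rotTile (expA c1 c2) tA 2 = rotTile (expC c1 c2) tC 5 ∧
    rotTile (expC c1 c2) tC 0 = rotTile (expD c1 c2) tC 3 ∧
    rotTile (expC c1 c2) tC 2 = rotTile 0 tE 5 ∧
    rotTile 0 tB 2 = rotTile (expD c1 c2) tC 5 ∧
    rotTile (expD c1 c2) tC 0 =
      (if c1 = Color.blue ∧ c2 = Color.blue then Color.blue else Color.red) := by
  decide

end ANDGadget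

/-- the two-color AND subpuzzle: two input boundary edges at the bottom, one output boundary edge at the top; for each pair `(c₁, c₂) ∈ {blue, red}²` there is exactly one solution with colors `c₁`, `c₂` at the input edges, and it has color blue at the output edge if `c₁ = c₂ = blue` and color red otherwise. -/
theorem two_color_AND_subpuzzle :
    ∃ (P : Puzzle) (iL iR xOut : ℤ × ℤ),
      IsBoundary P iL 3 ∧ IsBoundary P iR 3 ∧ IsBoundary P xOut 0 ∧
      iL ≠ iR ∧ iL.2 < xOut.2 ∧ iR.2 < xOut.2 ∧
      ∀ c₁ ∈ ({Color.blue, Color.red} : Set Color),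
        ∀ c₂ ∈ ({Color.blue, Color.red} : Set Color),
          ∃ sol : ℤ × ℤ → Option Tile,
            (IsSolution P sol ∧ SolColor sol iL 3 c₁ ∧ SolColor sol iR 3 c₂ ∧
              SolColor sol xOut 0
                (if c₁ = Color.blue ∧ c₂ = Color.blue then Color.blue else Color.red)) ∧
            (∀ sol' : ℤ × ℤ → Option Tile,
              IsSolution P sol' → SolColor sol' iL 3 c₁ → SolColor sol' iR 3 c₂ →
                sol' = sol) := by
  refine ⟨P, pA, pC, pD, ⟨by decide, by decide⟩, ⟨by decide, by decide⟩,
    ⟨by decide, by decide⟩, by decide, by decide, by decide, ?_⟩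
  intro c1 _ c2 _
  obtain ⟨h1, h2, h3, h4, h5, h6, h7, h8, h9⟩ := exists_ok c1 c2
  refine ⟨mkSol (expA c1 c2) 0 (expC c1 c2) (expD c1 c2) 0,
    ⟨isSolution_mkSol _ _ _ _ _ h3 h4 h5 h6 h7 h8,
     ⟨_, mk_pA _ _ _ _ _, h1⟩, ⟨_, mk_pC _ _ _ _ _, h2⟩, ⟨_, mk_pD _ _ _ _ _, h9⟩⟩, ?_⟩
  intro sol' hsol' hL hR
  obtain ⟨hs1, hs2⟩ := hsol'
  obtain ⟨kA, hA⟩ := (hs1 pA).2 tA (by decide)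
  obtain ⟨kB, hB⟩ := (hs1 pB).2 tB (by decide)
  obtain ⟨kC, hC⟩ := (hs1 pC).2 tC (by decide)
  obtain ⟨kD, hD⟩ := (hs1 pD).2 tC (by decide)
  obtain ⟨kE, hE⟩ := (hs1 pE).2 tE (by decide)
  obtain ⟨sL, hsL, hcL⟩ := hL
  rw [hA] at hsL; injection hsL with hsL; subst hsL
  obtain ⟨sR, hsR, hcR⟩ := hR
  rw [hC] at hsR; injection hsR with hsR; subst hsR
  have eAB : rotTile kA tA 0 = rotTile kB tB 3 := hs2 pA 0 _ _ hA hB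
  have eAD : rotTile kA tA 1 = rotTile kD tC 4 := hs2 pA 1 _ _ hA hD
  have eAC : rotTile kA tA 2 = rotTile kC tC 5 := hs2 pA 2 _ _ hA hC
  have eCD : rotTile kC tC 0 = rotTile kD tC 3 := hs2 pC 0 _ _ hC hD
  have eCE : rotTile kC tC 2 = rotTile kE tE 5 := hs2 pC 2 _ _ hC hE
  have eBD : rotTile kB tB 2 = rotTile kD tC 5 := hs2 pB 2 _ _ hB hD
  obtain ⟨wA, wB, wC, wD, wE⟩ :=
    uniq_rots c1 c2 kA kB kC kD kE hcL hcR eAB eAD eAC eCD eCE eBD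
  funext x
  rcases eq_or_ne x pA with rfl | n1
  · rw [hA, wA, mk_pA]
  rcases eq_or_ne x pB with rfl | n2
  · rw [hB, wB, mk_pB]
  rcases eq_or_ne x pC with rfl | n3
  · rw [hC, wC, mk_pC]
  rcases eq_or_ne x pD with rfl | n4
  · rw [hD, wD, mk_pD]
  rcases eq_or_ne x pE with rfl | n5
  · rw [hE, wE, mk_pE]
  rw [(hs1 x).1 (Ptiles_none n1 n2 n3 n4 n5), mk_none _ _ _ _ _ n1 n2 n3 n4 n5]
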